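/- Let $G(r,t) = (4\pi t)^{-3/2} e^{-t} \frac{r}{\sinh r} e^{-r^2/(4t)}$ and $Q(r) = \frac{r}{\sinh r}$. Fix $a > 0$ and $r > a$. Then $\lim_{t \to \infty} t^{3/2} e^{t}\, \big( G(r-a, t) - G(r, t) \big) = (4\pi)^{-3/2}\big( Q(r-a) - Q(r) \big) > 0$. In particular, for the solution $u(x,t)$ of the heat equation on $\mathbb{H}^3$ with initial datum a unit Dirac mass displaced to a point at distance $a$ from the pole, whose values along the axis through the pole and the displaced point are $u = G(r-a,t)$, the renormalized sup-norm difference $t^{3/2} e^{t} \|u(\cdot,t) - G(\cdot,t)\|_\infty$ does not tend to $0$. -/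

import Mathlib

open Real Filter

/-- The limit profile `Q(r) = r / sinh r`, extended continuously by `Q(0) = 1`. -/
noncomputable def limitProfile (r : ℝ) : ℝ :=
  if r = 0 then 1 else r / Real.sinh r

/-- The fundamental solution of the heat equation on `ℍ³` in geodesic polar
coordinates: `G(r,t) = (4πt)^(-3/2) e^{-t} (r / sinh r) e^{-r²/(4t)}`. -/
noncomputable def hypHeatKernel (r t : ℝ) : ℝ :=
  (4 * π * t) ^ (-(3 : ℝ) / 2) * Real.exp (-t) * (r / Real.sinh r) *
    Real.exp (-r ^ 2 / (4 * t))

lemma sinh_lt_mul_cosh' {x : ℝ} (hx : 0 < x) : Real.sinh x < x * Real.cosh x := by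
  have h : StrictMonoOn (fun x : ℝ => x * Real.cosh x - Real.sinh x) (Set.Ici 0) := by
    apply strictMonoOn_of_deriv_pos (convex_Ici 0)
    · fun_prop
    · intro y hy
      rw [interior_Ici] at hy
      have hd : HasDerivAt (fun x : ℝ => x * Real.cosh x - Real.sinh x)
          (1 * Real.cosh y + y * Real.sinh y - Real.cosh y) y :=
        ((hasDerivAt_id y).mul (Real.hasDerivAt_cosh y)).sub (Real.hasDerivAt_sinh y)
      rw [hd.deriv]
      have hy' : 0 < y := hy
      have := Real.sinh_pos_iff.2 hy'
      nlinarith [mul_pos hy' this]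
  have := h Set.self_mem_Ici (Set.mem_Ici.2 hx.le) hx
  simpa using this

lemma Q_strict_anti' {s r : ℝ} (hs : 0 < s) (hsr : s < r) :
    r / Real.sinh r < s / Real.sinh s := by
  have hr : 0 < r := hs.trans hsr
  have hss := Real.sinh_pos_iff.2 hs
  have hsr' := Real.sinh_pos_iff.2 hr
  have h : StrictMonoOn (fun x : ℝ => Real.sinh x / x) (Set.Ioi 0) := by
    apply strictMonoOn_of_deriv_pos (convex_Ioi 0)
    · exact Real.continuous_sinh.continuousOn.div continuousOn_id
        (fun x hx => ne_of_gt hx)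
    · intro y hy
      rw [interior_Ioi] at hy
      have hd : HasDerivAt (fun x : ℝ => Real.sinh x / x)
          ((Real.cosh y * y - Real.sinh y * 1) / y ^ 2) y :=
        (Real.hasDerivAt_sinh y).div (hasDerivAt_id y) (ne_of_gt hy)
      rw [hd.deriv]
      have hy' : 0 < y := hy
      have h1 := sinh_lt_mul_cosh' hy'
      have h2 : (0:ℝ) < y ^ 2 := pow_pos hy' 2
      apply div_pos _ h2
      nlinarith
  have hlt : Real.sinh s / s < Real.sinh r / r := h (Set.mem_Ioi.2 hs) (Set.mem_Ioi.2 hr) hsr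
  rw [div_lt_div_iff₀ hs hr] at hlt
  rw [div_lt_div_iff₀ hsr' hss]
  nlinarith

/-- For a displaced Dirac mass at distance `a` from the pole, along the axis (where the
solution equals `G(r-a,t)`) one has
`t^{3/2} e^t (G(r-a,t) - G(r,t)) → (4π)^{-3/2} (Q(r-a) - Q(r)) > 0`;
consequently no renormalized sup-norm `N` dominating this pointwise difference can tend
to `0`. -/
theorem displaced_mass_no_sup_convergence (a r : ℝ) (ha : 0 < a) (hr : a < r) :
    Tendsto (fun t : ℝ =>
        t ^ ((3 : ℝ) / 2) * Real.exp t * (hypHeatKernel (r - a) t - hypHeatKernel r t))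
      atTop (nhds ((4 * π) ^ (-(3 : ℝ) / 2) * (limitProfile (r - a) - limitProfile r))) ∧
    0 < (4 * π) ^ (-(3 : ℝ) / 2) * (limitProfile (r - a) - limitProfile r) ∧
    ∀ N : ℝ → ℝ, (∀ t : ℝ, |hypHeatKernel (r - a) t - hypHeatKernel r t| ≤ N t) →
      ¬ Tendsto (fun t : ℝ => t ^ ((3 : ℝ) / 2) * Real.exp t * N t) atTop (nhds 0) := by
  have hs : 0 < r - a := by linarith
  have hr0 : 0 < r := ha.trans hr
  have hQ : r / Real.sinh r < (r - a) / Real.sinh (r - a) := Q_strict_anti' hs (by linarith)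
  have hL : limitProfile (r - a) - limitProfile r
      = (r - a) / Real.sinh (r - a) - r / Real.sinh r := by
    rw [limitProfile, limitProfile, if_neg hs.ne', if_neg hr0.ne']
  have hpos : 0 < (4 * π) ^ (-(3 : ℝ) / 2) * (limitProfile (r - a) - limitProfile r) := by
    apply mul_pos
    · have : (0:ℝ) < 4 * π := by positivity
      positivity
    · rw [hL]; linarith
  have heq : ∀ᶠ t in atTop, t ^ ((3:ℝ)/2) * Real.exp t *
      (hypHeatKernel (r - a) t - hypHeatKernel r t)
      = (4*π)^(-(3:ℝ)/2) * (((r - a) / Real.sinh (r - a)) * Real.exp (-(r-a)^2/(4*t))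
          - (r / Real.sinh r) * Real.exp (-r^2/(4*t))) := by
    filter_upwards [eventually_gt_atTop 0] with t ht
    unfold hypHeatKernel
    have h4 : (4*π*t) ^ (-(3:ℝ)/2) = (4*π)^(-(3:ℝ)/2) * t^(-(3:ℝ)/2) :=
      Real.mul_rpow (by positivity) ht.le
    have ht1 : t ^ ((3:ℝ)/2) * t ^ (-(3:ℝ)/2) = 1 := by
      rw [← Real.rpow_add ht]; norm_num
    have ht2 : Real.exp t * Real.exp (-t) = 1 := by
      rw [← Real.exp_add]; norm_num
    rw [h4]
    have e : ∀ c d : ℝ, t ^ ((3:ℝ)/2) * Real.exp t *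
        ((4*π)^(-(3:ℝ)/2) * t^(-(3:ℝ)/2) * Real.exp (-t) * c * d)
        = (4*π)^(-(3:ℝ)/2) * (c * d) := by
      intro c d
      have : t ^ ((3:ℝ)/2) * Real.exp t *
          ((4*π)^(-(3:ℝ)/2) * t^(-(3:ℝ)/2) * Real.exp (-t) * c * d)
          = (t ^ ((3:ℝ)/2) * t ^ (-(3:ℝ)/2)) * (Real.exp t * Real.exp (-t)) *
            ((4*π)^(-(3:ℝ)/2) * (c * d)) := by ring
      rw [this, ht1, ht2]; ring
    rw [mul_sub, e, e, ← mul_sub]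
  have hexp : ∀ c : ℝ, Tendsto (fun t : ℝ => Real.exp (-c^2/(4*t))) atTop (nhds 1) := by
    intro c
    have h0 : Tendsto (fun t : ℝ => -c^2/(4*t)) atTop (nhds 0) :=
      Tendsto.div_atTop tendsto_const_nhds (Tendsto.const_mul_atTop (by norm_num) tendsto_id)
    have := (Real.continuous_exp.tendsto 0).comp h0
    simpa [Function.comp_def] using this
  have htend : Tendsto (fun t : ℝ => (4*π)^(-(3:ℝ)/2) *
      (((r - a) / Real.sinh (r - a)) * Real.exp (-(r-a)^2/(4*t))
        - (r / Real.sinh r) * Real.exp (-r^2/(4*t)))) atTop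
      (nhds ((4 * π) ^ (-(3 : ℝ) / 2) * (limitProfile (r - a) - limitProfile r))) := by
    rw [hL]
    have h1 := (hexp (r - a)).const_mul ((r - a) / Real.sinh (r - a))
    have h2 := (hexp r).const_mul (r / Real.sinh r)
    have := (h1.sub h2).const_mul ((4*π)^(-(3:ℝ)/2))
    simpa using this
  have hlim := htend.congr' (heq.mono fun t ht => ht.symm)
  refine ⟨hlim, hpos, ?_⟩
  intro N hN hcon
  have hsq : Tendsto (fun t : ℝ => t ^ ((3:ℝ)/2) * Real.exp t *
      (hypHeatKernel (r - a) t - hypHeatKernel r t)) atTop (nhds 0) := by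
    apply squeeze_zero_norm' _ hcon
    filter_upwards [eventually_ge_atTop (0:ℝ)] with t ht
    have h1 : 0 ≤ t ^ ((3:ℝ)/2) * Real.exp t := by positivity
    calc ‖t ^ ((3:ℝ)/2) * Real.exp t * (hypHeatKernel (r - a) t - hypHeatKernel r t)‖
        = t ^ ((3:ℝ)/2) * Real.exp t * |hypHeatKernel (r - a) t - hypHeatKernel r t| := by
          rw [Real.norm_eq_abs, abs_mul, abs_of_nonneg h1]
      _ ≤ t ^ ((3:ℝ)/2) * Real.exp t * N t := mul_le_mul_of_nonneg_left (hN t) h1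
  exact hpos.ne (tendsto_nhds_unique hsq hlim)
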